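/- As θ → 0⁺ with s = sin(θ/2), the quantity I₂(θ) = (α₂+α₄)²/(α₂α₄), where α₂ = −((cos θ−1)+sin θ)/(2(cos θ−1) sin θ) and α₄ = 1/sin θ, has the asymptotic expansion I₂ = 1/(2s) + 3/2 + (7/4)s + 2s² + (47/16)s³ + 4s⁴ + O(s⁵). -/

import Mathlib

open Real

set_option maxHeartbeats 1000000 in
lemma I2_key (s c : ℝ) (hs : 0 < s) (hs4 : s ≤ 1/4) (hc : (9:ℝ)/10 ≤ c)
    (hc2 : c ^ 2 = 1 - s ^ 2) :
    |(c + s) ^ 3 / (2 * s * (1 - 2 * s ^ 2)) -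
      (1 / (2 * s) + 3 / 2 + 7 / 4 * s + 2 * s ^ 2 + 47 / 16 * s ^ 3 +
        4 * s ^ 4)| ≤ 30 * s ^ 5 := by
  have hsq : s ^ 2 ≤ 1/16 := by nlinarith
  have h4 : s ^ 4 ≤ 1/256 := by nlinarith
  have h6 : s ^ 6 ≤ 1/4096 := by nlinarith [pow_nonneg hs.le 2, pow_nonneg hs.le 4]
  have h6n : (0:ℝ) ≤ s ^ 6 := pow_nonneg hs.le 6
  have h1 : (0:ℝ) < 1 - 2 * s ^ 2 := by nlinarith
  have h2 : (0:ℝ) < 2 * s * (1 - 2 * s ^ 2) := by positivity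
  have hfrac : (c + s) ^ 3 / (2 * s * (1 - 2 * s ^ 2)) -
      (1 / (2 * s) + 3 / 2 + 7 / 4 * s + 2 * s ^ 2 + 47 / 16 * s ^ 3 +
        4 * s ^ 4) = ((c + s) ^ 3 -
        (1 + 3*s + 3/2*s^2 - 2*s^3 - 9/8*s^4 - 47/4*s^6 - 16*s^7)) /
        (2 * s * (1 - 2 * s ^ 2)) := by
    rw [eq_div_iff h2.ne', sub_mul, div_mul_cancel₀ _ h2.ne']
    field_simp
    ring
  rw [hfrac, abs_div, abs_of_pos h2, div_le_iff₀ h2]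
  have hD : (c + s) ^ 3 - (1 + 3*s + 3/2*s^2 - 2*s^3 - 9/8*s^4 - 47/4*s^6 - 16*s^7)
      = (c * (1 + 2*s^2) - (1 + 3/2*s^2 - 9/8*s^4 - 47/4*s^6)) + 16*s^7 := by
    linear_combination (c + 3*s) * hc2
  have hxy : (c * (1 + 2*s^2) - (1 + 3/2*s^2 - 9/8*s^4 - 47/4*s^6)) *
      (c * (1 + 2*s^2) + (1 + 3/2*s^2 - 9/8*s^4 - 47/4*s^6)) =
      s^6 * (183/8 + 2175/64*s^2 - 423/16*s^4 - 2209/16*s^6) := by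
    linear_combination (1 + 2*s^2)^2 * hc2
  have hy1 : 1 ≤ c * (1 + 2*s^2) + (1 + 3/2*s^2 - 9/8*s^4 - 47/4*s^6) := by
    nlinarith [mul_nonneg (by linarith : (0:ℝ) ≤ c) (sq_nonneg s)]
  have hBpos : (0:ℝ) ≤ 183/8 + 2175/64*s^2 - 423/16*s^4 - 2209/16*s^6 := by
    nlinarith [sq_nonneg s]
  have hBle : (183:ℝ)/8 + 2175/64*s^2 - 423/16*s^4 - 2209/16*s^6 ≤ 26 := by
    nlinarith [pow_nonneg hs.le 4]
  have hx0 : 0 ≤ c * (1 + 2*s^2) - (1 + 3/2*s^2 - 9/8*s^4 - 47/4*s^6) := by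
    nlinarith [mul_nonneg h6n hBpos]
  have hxle : c * (1 + 2*s^2) - (1 + 3/2*s^2 - 9/8*s^4 - 47/4*s^6) ≤ 26 * s^6 := by
    nlinarith [mul_le_mul_of_nonneg_left hBle h6n,
      mul_le_mul_of_nonneg_left hy1 hx0]
  have h7 : 16 * s^7 ≤ 4 * s^6 := by nlinarith [h6n]
  have h7n : (0:ℝ) ≤ 16 * s^7 := by positivity
  have habs : |(c + s) ^ 3 -
      (1 + 3*s + 3/2*s^2 - 2*s^3 - 9/8*s^4 - 47/4*s^6 - 16*s^7)| ≤ 30 * s^6 := by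
    rw [hD, abs_le]
    constructor <;> linarith
  calc |(c + s) ^ 3 - (1 + 3*s + 3/2*s^2 - 2*s^3 - 9/8*s^4 - 47/4*s^6 - 16*s^7)|
      ≤ 30 * s^6 := habs
    _ ≤ 30 * s ^ 5 * (2 * s * (1 - 2 * s ^ 2)) := by
        nlinarith [mul_le_mul_of_nonneg_left hsq h6n]

/-- asymptotic expansion of `I₂(θ) = (α₂+α₄)²/(α₂α₄)` as
`θ → 0⁺`, with `s = sin(θ/2)`:
`I₂ = 1/(2s) + 3/2 + (7/4)s + 2s² + (47/16)s³ + 4s⁴ + O(s⁵)`. -/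
theorem I2_asymptotic :
    ∃ C > (0 : ℝ), ∃ δ > (0 : ℝ), ∀ θ : ℝ, 0 < θ → θ < δ →
      |(-((cos θ - 1) + sin θ) / (2 * (cos θ - 1) * sin θ) + 1 / sin θ) ^ 2 /
          (-((cos θ - 1) + sin θ) / (2 * (cos θ - 1) * sin θ) * (1 / sin θ)) -
        (1 / (2 * sin (θ / 2)) + 3 / 2 + 7 / 4 * sin (θ / 2) +
          2 * sin (θ / 2) ^ 2 + 47 / 16 * sin (θ / 2) ^ 3 +
          4 * sin (θ / 2) ^ 4)| ≤
      C * sin (θ / 2) ^ 5 := by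
  refine ⟨30, by norm_num, 1/2, by norm_num, fun θ hθ hθδ => ?_⟩
  have ht0 : 0 < θ / 2 := by positivity
  have ht4 : θ / 2 < 1/4 := by linarith
  have hs : 0 < sin (θ / 2) := sin_pos_of_pos_of_lt_pi ht0 (by linarith [pi_gt_three])
  have hs4 : sin (θ / 2) ≤ 1/4 := le_of_lt (lt_of_lt_of_le (sin_lt ht0) ht4.le)
  have hc2 : cos (θ / 2) ^ 2 = 1 - sin (θ / 2) ^ 2 := by
    have := sin_sq_add_cos_sq (θ / 2); linarith
  have hcpos : 0 < cos (θ / 2) := cos_pos_of_mem_Ioo ⟨by linarith [pi_gt_three], by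
    linarith [pi_gt_three]⟩
  have hc : (9:ℝ)/10 ≤ cos (θ / 2) := by nlinarith
  set s := sin (θ / 2) with hsdef
  set c := cos (θ / 2) with hcdef
  have hcs : s < c := by linarith
  have hne1 : c - s ≠ 0 := sub_ne_zero.mpr hcs.ne'
  have hne2 : c + s ≠ 0 := by positivity
  have hsinθ : sin θ = 2 * s * c := by
    rw [show θ = 2 * (θ / 2) by ring, sin_two_mul]
  have hcm : cos θ - 1 = -(2 * s ^ 2) := by
    rw [show θ = 2 * (θ / 2) by ring, cos_two_mul]; linarith
  have hα : -(-(2 * s ^ 2) + 2 * s * c) / (2 * -(2 * s ^ 2) * (2 * s * c)) =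
      (c - s) / (4 * s ^ 2 * c) := by
    rw [div_eq_div_iff (by nlinarith [mul_pos (pow_pos hs 3) hcpos])
      (by positivity)]
    ring
  have hexpr : (-((cos θ - 1) + sin θ) / (2 * (cos θ - 1) * sin θ) + 1 / sin θ) ^ 2 /
      (-((cos θ - 1) + sin θ) / (2 * (cos θ - 1) * sin θ) * (1 / sin θ)) =
      (c + s) ^ 3 / (2 * s * ((c - s) * (c + s))) := by
    rw [hcm, hsinθ, hα]
    field_simp
    ring
  rw [hexpr, show (c - s) * (c + s) = 1 - 2 * s ^ 2 by linear_combination hc2]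
  exact I2_key s c hs hs4 hc hc2
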